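/- arXiv:2312.16976 — 5 statements merged into one kernel-verified Lean document; each statement's English description precedes it below -/
import Mathlib

section
/- Let $G$ be a group, and let $c$ be a closure operator on the power set of $G$ satisfying: (a) $G$-invariance: $c(gA) = g\,c(A)$ for all $g \in G$, $A \subseteq G$; (b) every closure of a finite set containing $1$ is again mapped into the family of 'compact sets containing 1'. Define $S_c = \{(\Delta, g) : g \in G, \Delta = c(F) \text{ for some finite } F \subseteq G, 1 \in \Delta, g \in \Delta\}$ with multiplication $(\Delta, g)(\Xi, h) = (c(\Delta \cup g\Xi), gh)$. Then this multiplication is associative. -/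
open scoped Pointwise

lemma cl_union_left {G : Type*} (c : ClosureOperator (Set G)) (A B : Set G) :
    c (c A ∪ B) = c (A ∪ B) := by
  apply le_antisymm
  · rw [← c.idempotent (A ∪ B)]
    apply c.monotone
    exact Set.union_subset (c.monotone Set.subset_union_left)
      ((c.le_closure _).trans (c.monotone Set.subset_union_right))
  · exact c.monotone (Set.union_subset_union_left _ (c.le_closure A))

lemma cl_union_right {G : Type*} (c : ClosureOperator (Set G)) (A B : Set G) :
    c (A ∪ c B) = c (A ∪ B) := by
  rw [Set.union_comm, cl_union_left, Set.union_comm]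

/-- Associativity of the multiplication `(Δ, g)(Ξ, h) = (c (Δ ∪ gΞ), gh)` on pairs
`(Δ, g)` where `Δ` is the closure of a finite set containing `1` and `g`, for a
`G`-invariant closure operator `c` on subsets of the group `G`. -/
theorem stmt5 {G : Type*} [Group G] (c : ClosureOperator (Set G))
    (hinv : ∀ (g : G) (A : Set G), c (g • A) = g • c A) :
    ∀ (Δ Ξ Ω : Set G) (g h k : G),
      (∃ F : Set G, F.Finite ∧ Δ = c F) → (1 : G) ∈ Δ → g ∈ Δ →
      (∃ F : Set G, F.Finite ∧ Ξ = c F) → (1 : G) ∈ Ξ → h ∈ Ξ →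
      (∃ F : Set G, F.Finite ∧ Ω = c F) → (1 : G) ∈ Ω → k ∈ Ω →
      (c (c (Δ ∪ g • Ξ) ∪ (g * h) • Ω), (g * h) * k) =
        (c (Δ ∪ g • c (Ξ ∪ h • Ω)), g * (h * k)) := by
  intro Δ Ξ Ω g h k _ _ _ _ _ _ _ _ _
  rw [← hinv, cl_union_right, cl_union_left, Set.smul_set_union, smul_smul,
    Set.union_assoc, mul_assoc]
end

section
/- In the inverse monoid $S_c$ (pairs $(\Delta, g)$ with $\Delta$ $c$-closed containing $1$ and $g$, multiplication $(\Delta,g)(\Xi,h) = (c(\Delta \cup g\Xi), gh)$, inversion $(\Delta,g)^{-1}=(g^{-1}\Delta, g^{-1})$), the natural partial order satisfies: $(\Delta, g) \leq (\Xi, h)$ if and only if $g = h$ and $\Xi \subseteq \Delta$. -/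
open scoped Pointwise

variable {G : Type*} [Group G]

/-- The set of pairs `(Δ, g)` with `Δ` a `c`-closed subset of `G` containing `1` and `g`. -/
def SC (c : ClosureOperator (Set G)) : Type _ :=
  {p : Set G × G // c p.1 = p.1 ∧ (1 : G) ∈ p.1 ∧ p.2 ∈ p.1}

/-- Multiplication `(Δ, g)(Ξ, h) = (c (Δ ∪ gΞ), gh)`. -/
def SCmul (c : ClosureOperator (Set G)) (s t : SC c) : SC c :=
  ⟨(c (s.1.1 ∪ s.1.2 • t.1.1), s.1.2 * t.1.2), by
    refine ⟨c.idempotent _, ?_, ?_⟩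
    · exact c.le_closure _ (Or.inl s.2.2.1)
    · exact c.le_closure _ (Or.inr (by
        simpa [smul_eq_mul] using Set.smul_mem_smul_set (a := s.1.2) t.2.2.2))⟩

/-- Inversion `(Δ, g)⁻¹ = (g⁻¹Δ, g⁻¹)` (needs `G`-invariance of `c`). -/
def SCinv (c : ClosureOperator (Set G))
    (hinv : ∀ (g : G) (A : Set G), c (g • A) = g • c A) (s : SC c) : SC c :=
  ⟨(s.1.2⁻¹ • s.1.1, s.1.2⁻¹), by
    refine ⟨by rw [hinv, s.2.1], ?_, ?_⟩
    · exact Set.mem_smul_set.mpr ⟨s.1.2, s.2.2.2, by simp⟩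
    · exact Set.mem_smul_set.mpr ⟨1, s.2.2.1, by simp⟩⟩

/-- The identity element `(c {1}, 1)`. -/
def SCone (c : ClosureOperator (Set G)) : SC c :=
  ⟨(c {1}, 1), c.idempotent _, c.le_closure _ rfl, c.le_closure _ rfl⟩

/-- The candidate maximum `(c {1, g}, g)` of the `σ`-class of `(Δ, g)`. -/
def SCm (c : ClosureOperator (Set G)) (s : SC c) : SC c :=
  ⟨(c {1, s.1.2}, s.1.2), c.idempotent _, c.le_closure _ (Or.inl rfl),
    c.le_closure _ (Or.inr rfl)⟩

/-- The natural partial order on `S_c` (namely `s ≤ t ↔ s = (s s⁻¹) t`) is given by: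
`(Δ, g) ≤ (Ξ, h)` iff `g = h` and `Ξ ⊆ Δ`. -/
theorem stmt9 (c : ClosureOperator (Set G))
    (hinv : ∀ (g : G) (A : Set G), c (g • A) = g • c A) :
    ∀ s t : SC c,
      SCmul c (SCmul c s (SCinv c hinv s)) t = s ↔ (s.1.2 = t.1.2 ∧ t.1.1 ⊆ s.1.1) := by
  intro s t
  constructor
  · intro h
    have h' := congrArg Subtype.val h
    have h2 : s.1.2 * s.1.2⁻¹ * t.1.2 = s.1.2 := congrArg Prod.snd h'
    have hg : s.1.2 = t.1.2 := by
      have := h2; simpa using this.symm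
    refine ⟨hg, ?_⟩
    have h1 : c ((c (s.1.1 ∪ s.1.2 • s.1.2⁻¹ • s.1.1) : Set G) ∪ (s.1.2 * s.1.2⁻¹) • t.1.1) = s.1.1 :=
      congrArg Prod.fst h'
    intro x hx
    rw [← h1]
    refine c.le_closure _ (Or.inr ?_)
    simpa using hx
  · rintro ⟨hg, hsub⟩
    apply Subtype.ext
    apply Prod.ext
    · show c ((c (s.1.1 ∪ s.1.2 • s.1.2⁻¹ • s.1.1) : Set G) ∪ (s.1.2 * s.1.2⁻¹) • t.1.1) = s.1.1
      have e1 : s.1.2 • s.1.2⁻¹ • s.1.1 = s.1.1 := by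
        rw [smul_smul]; simp
      have e2 : (s.1.2 * s.1.2⁻¹) • t.1.1 = t.1.1 := by simp
      rw [e1, e2, Set.union_self, s.2.1, Set.union_eq_self_of_subset_right hsub, s.2.1]
    · show s.1.2 * s.1.2⁻¹ * t.1.2 = s.1.2
      simp [hg]
end

section
/- The inverse monoid $S_c$ (pairs $(\Delta, g)$ with $\Delta$ $c$-closed containing $1$ and $g$) is $E$-unitary: if $e$ is an idempotent and $e \leq s$ in the natural partial order, then $s$ is an idempotent. Equivalently, the projection $(\Delta, g) \mapsto g$ onto $G$ is a monoid homomorphism whose preimage of $1$ is exactly the set of idempotents. -/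
open scoped Pointwise

variable {G : Type*} [Group G]

/-- `S_c` is `E`-unitary: anything above an idempotent in the natural partial order is
idempotent; equivalently, the projection onto the second coordinate is a monoid
homomorphism whose preimage of `1` consists exactly of the idempotents. -/
theorem stmt10 (c : ClosureOperator (Set G))
    (hinv : ∀ (g : G) (A : Set G), c (g • A) = g • c A) :
    (∀ e s : SC c, SCmul c e e = e → SCmul c (SCmul c e (SCinv c hinv e)) s = e →
      SCmul c s s = s) ∧
    (∀ s t : SC c, (SCmul c s t).1.2 = s.1.2 * t.1.2) ∧
    ((SCone c).1.2 = 1) ∧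
    (∀ s : SC c, s.1.2 = 1 ↔ SCmul c s s = s) := by
  have hidem : ∀ s : SC c, s.1.2 = 1 → SCmul c s s = s := by
    intro s hs
    apply Subtype.ext
    apply Prod.ext
    · show c (s.1.1 ∪ s.1.2 • s.1.1) = s.1.1
      rw [hs, one_smul, Set.union_self, s.2.1]
    · show s.1.2 * s.1.2 = s.1.2
      rw [hs, mul_one]
  have hone : ∀ s : SC c, SCmul c s s = s → s.1.2 = 1 := by
    intro s h
    have h2 : s.1.2 * s.1.2 = s.1.2 := congrArg (fun x => x.1.2) h
    exact mul_eq_right.mp h2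
  refine ⟨?_, fun s t => rfl, rfl, fun s => ⟨hidem s, hone s⟩⟩
  intro e s he h
  have he1 : e.1.2 = 1 := hone e he
  have h2 : (e.1.2 * e.1.2⁻¹) * s.1.2 = e.1.2 := congrArg (fun x => x.1.2) h
  apply hidem
  rw [he1] at h2
  simpa using h2
end

section
/- Let $S_c$ be the inverse monoid of pairs $(\Delta, g)$ with $\Delta$ $c$-closed containing $1$ and $g$ (where $c$ is a $G$-invariant closure operator on subsets of a group $G$). For each pair $(\Delta, g)$, the element $(c(\{1, g\}), g)$ is the greatest element of the $\sigma$-class of $(\Delta, g)$, where $\sigma$ identifies pairs with equal second coordinate. Hence $S_c$ is $F$-inverse. -/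
open scoped Pointwise

variable {G : Type*} [Group G]

/-- For each `(Δ, g) ∈ S_c`, the element `(c {1, g}, g)` is the greatest element of its
`σ`-class (where `σ` identifies pairs with equal second coordinate, and the natural
partial order is `t ≤ m ↔ t = (t t⁻¹) m`).  Hence `S_c` is `F`-inverse. -/
theorem stmt12 (c : ClosureOperator (Set G))
    (hinv : ∀ (g : G) (A : Set G), c (g • A) = g • c A) :
    ∀ s : SC c, (SCm c s).1.2 = s.1.2 ∧
      ∀ t : SC c, t.1.2 = s.1.2 →
        SCmul c (SCmul c t (SCinv c hinv t)) (SCm c s) = t := by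
  intro s
  refine ⟨rfl, fun t ht => ?_⟩
  apply Subtype.ext
  apply Prod.ext
  · show c ((c (t.1.1 ∪ t.1.2 • (t.1.2⁻¹ • t.1.1))) ∪ (t.1.2 * t.1.2⁻¹) • c {1, s.1.2})
      = t.1.1
    have h1 : t.1.2 • (t.1.2⁻¹ • t.1.1) = t.1.1 := smul_inv_smul _ _
    have h2 : c {1, s.1.2} ⊆ t.1.1 := by
      rw [← t.2.1]
      exact c.monotone (by
        rintro x (rfl | rfl)
        exacts [t.2.2.1, ht ▸ t.2.2.2])
    rw [h1, Set.union_self, t.2.1, mul_inv_cancel, one_smul,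
      Set.union_eq_self_of_subset_right h2, t.2.1]
  · show (t.1.2 * t.1.2⁻¹) * s.1.2 = t.1.2
    rw [mul_inv_cancel, one_mul, ht]
end

section
/- Let $c, c'$ be $G$-invariant closure operators on the power set of a group $G$ with $c(A) \subseteq c'(A)$ for all $A$. Then the map $\varphi: S_c \to S_{c'}$, $(\Delta, g) \mapsto (c'(\Delta), g)$, is a monoid homomorphism that commutes with inversion. -/
open scoped Pointwise

variable {G : Type*} [Group G]

/-- The map `(Δ, g) ↦ (c' Δ, g)` from `S_c` to `S_{c'}`, for `c ≤ c'` pointwise. -/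
def SCmap {c c' : ClosureOperator (Set G)} (hle : ∀ A : Set G, c A ≤ c' A) (s : SC c) :
    SC c' :=
  ⟨(c' s.1.1, s.1.2), c'.idempotent _, c'.le_closure _ s.2.2.1, c'.le_closure _ s.2.2.2⟩

/-- If `c ≤ c'` pointwise are `G`-invariant closure operators on subsets of `G`, then
`(Δ, g) ↦ (c' Δ, g)` is a monoid homomorphism `S_c → S_{c'}` commuting with inversion. -/
theorem stmt13 (c c' : ClosureOperator (Set G))
    (hinv : ∀ (g : G) (A : Set G), c (g • A) = g • c A)
    (hinv' : ∀ (g : G) (A : Set G), c' (g • A) = g • c' A)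
    (hle : ∀ A : Set G, c A ≤ c' A) :
    (∀ s t : SC c, SCmap hle (SCmul c s t) = SCmul c' (SCmap hle s) (SCmap hle t)) ∧
    (SCmap hle (SCone c) = SCone c') ∧
    (∀ s : SC c, SCmap hle (SCinv c hinv s) = SCinv c' hinv' (SCmap hle s)) := by
  have key : ∀ A : Set G, c' (c A) = c' A := fun A =>
    le_antisymm ((c'.monotone (hle A)).trans (le_of_eq (c'.idempotent A)))
      (c'.monotone (c.le_closure A))
  have key2 : ∀ A B : Set G, c' (c' A ∪ c' B) = c' (A ∪ B) := fun A B => by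
    refine le_antisymm ?_ (c'.monotone (Set.union_subset_union (c'.le_closure A) (c'.le_closure B)))
    have : c' A ∪ c' B ≤ c' (A ∪ B) :=
      Set.union_subset (c'.monotone Set.subset_union_left) (c'.monotone Set.subset_union_right)
    simpa [c'.idempotent] using c'.monotone this
  refine ⟨fun s t => ?_, ?_, fun s => ?_⟩
  · apply Subtype.ext
    simp only [SCmap, SCmul, Prod.mk.injEq]
    refine ⟨?_, trivial⟩
    rw [key, ← hinv', key2]
  · apply Subtype.ext
    simp only [SCmap, SCone, Prod.mk.injEq]
    exact ⟨key _, trivial⟩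
  · apply Subtype.ext
    simp only [SCmap, SCinv, Prod.mk.injEq]
    exact ⟨hinv' _ _, trivial⟩
end
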